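/- Let {a_m} be a nonnegative real sequence with a_0 ≤ A for some A > 0, and suppose a_m ≤ a_{m-1}(1 - ξ²a_{m-1}/A) + b_m for all m ≥ 1, where b_m ≥ 0 and b_0 = 0, and ξ > 0. Then for every m ≥ 0, a_m ≤ A/(1 + mξ²) + ∑_{k=0}^{m} b_k. -/

import Mathlib

lemma key_stmt_0 (A ξ S x u : ℝ) (hA : 0 < A) (hξ : 0 < ξ) (hu : 1 ≤ u)
    (hS : 0 ≤ S) (hx : 0 ≤ x) (hxb : x ≤ A / u + S) :
    x * (1 - ξ ^ 2 * x / A) ≤ A / (u + ξ ^ 2) + S := by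
  have hu0 : 0 < u := by linarith
  have hv0 : 0 < u + ξ ^ 2 := by positivity
  have hξ2 : 0 < ξ ^ 2 := by positivity
  set B := A / u with hBdef
  have hB0 : 0 < B := by positivity
  have hBu : B * u = A := div_mul_cancel₀ A hu0.ne'
  have hfx : x * (1 - ξ ^ 2 * x / A) = (x * A - ξ ^ 2 * x ^ 2) / A := by
    field_simp
  rcases le_or_gt (2 * ξ ^ 2) u with hc | hc
  · have hBA : 2 * ξ ^ 2 * B ≤ A := by nlinarith
    have hnum : x * A - ξ ^ 2 * x ^ 2 ≤ B * A - ξ ^ 2 * B ^ 2 + S * A := by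
      rcases le_or_gt x B with h | h
      · nlinarith [mul_nonneg (sub_nonneg.2 h) (by nlinarith : (0:ℝ) ≤ A - ξ^2*(B+x)), mul_nonneg hS hA.le]
      · nlinarith [mul_nonneg (by linarith : (0:ℝ) ≤ S - (x - B)) hA.le,
          mul_nonneg (mul_nonneg hξ2.le (by linarith : (0:ℝ) ≤ x - B)) (by linarith : (0:ℝ) ≤ x + B)]
    have hstep : x * (1 - ξ ^ 2 * x / A) ≤ B * (1 - ξ ^ 2 * B / A) + S := by
      rw [hfx]
      have : B * (1 - ξ ^ 2 * B / A) + S = (B * A - ξ ^ 2 * B ^ 2 + S * A) / A := by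
        field_simp
      rw [this]
      gcongr
    have hfB : B * (1 - ξ ^ 2 * B / A) ≤ A / (u + ξ ^ 2) := by
      have : B * (1 - ξ ^ 2 * B / A) = (B * A - ξ ^ 2 * B ^ 2) / A := by field_simp
      rw [this, div_le_div_iff₀ hA hv0]
      nlinarith [sq_nonneg (ξ ^ 2 * B)]
    linarith
  · have h1 : x * (1 - ξ ^ 2 * x / A) ≤ A / (4 * ξ ^ 2) := by
      rw [hfx, div_le_div_iff₀ hA (by positivity)]
      nlinarith [sq_nonneg (2 * ξ ^ 2 * x - A)]
    have h2 : A / (4 * ξ ^ 2) ≤ A / (u + ξ ^ 2) := by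
      apply div_le_div_of_nonneg_left hA.le hv0
      nlinarith
    linarith

theorem stmt_0 (a b : ℕ → ℝ) (A ξ : ℝ) (hA : 0 < A) (hξ : 0 < ξ)
    (ha : ∀ m, 0 ≤ a m) (hb : ∀ m, 0 ≤ b m) (hb0 : b 0 = 0)
    (ha0 : a 0 ≤ A)
    (hrec : ∀ m : ℕ, 1 ≤ m → a m ≤ a (m - 1) * (1 - ξ ^ 2 * a (m - 1) / A) + b m) :
    ∀ m : ℕ, a m ≤ A / (1 + (m : ℝ) * ξ ^ 2) + ∑ k ∈ Finset.range (m + 1), b k := by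
  intro m
  induction m with
  | zero => simpa [hb0] using ha0
  | succ n ih =>
    have hSn : 0 ≤ ∑ k ∈ Finset.range (n + 1), b k :=
      Finset.sum_nonneg fun k _ => hb k
    have hu : (1:ℝ) ≤ 1 + (n : ℝ) * ξ ^ 2 := by nlinarith [sq_nonneg ξ, Nat.cast_nonneg (α := ℝ) n]
    have hk := key_stmt_0 A ξ (∑ k ∈ Finset.range (n + 1), b k) (a n)
      (1 + (n : ℝ) * ξ ^ 2) hA hξ hu hSn (ha n) ih
    have hr := hrec (n + 1) (by omega)
    simp only [Nat.add_sub_cancel] at hr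
    have hsum : ∑ k ∈ Finset.range (n + 1 + 1), b k
        = (∑ k ∈ Finset.range (n + 1), b k) + b (n + 1) := Finset.sum_range_succ b (n + 1)
    have hcast : (1:ℝ) + ((n : ℝ) + 1) * ξ ^ 2 = (1 + (n : ℝ) * ξ ^ 2) + ξ ^ 2 := by ring
    push_cast
    rw [hsum, hcast]
    linarith
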